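/- The collective spin operator S_Z = σ_z⊗I⊗I + I⊗σ_z⊗I + I⊗I⊗σ_z on (C²)^⊗3 preserves the code subspace C (spanned by the four J=1/2 DFS vectors) and acts on it as Π_C-block operator with identical action on the λ=0 and λ=1 subsystems; in particular S_Z commutes with the logical operators X̄ = (1/√3)(E₂₃-E₁₃) and Z̄ = (1/3)(E₁₃+E₂₃-2E₁₂). -/
import Mathlib


open Matrix

/-- Computational basis vector `|abc⟩` of the 3-qubit space. -/
noncomputable def ket3 (a b c : Fin 2) : Fin 2 × Fin 2 × Fin 2 → ℂ :=
  fun x => if x = (a, b, c) then 1 else 0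

/-- Swap of qubits 1 and 2. -/
noncomputable def E12 : Matrix (Fin 2 × Fin 2 × Fin 2) (Fin 2 × Fin 2 × Fin 2) ℂ :=
  Matrix.of fun p q => if q = (p.2.1, p.1, p.2.2) then 1 else 0

/-- Swap of qubits 1 and 3. -/
noncomputable def E13 : Matrix (Fin 2 × Fin 2 × Fin 2) (Fin 2 × Fin 2 × Fin 2) ℂ :=
  Matrix.of fun p q => if q = (p.2.2, p.2.1, p.1) then 1 else 0

/-- Swap of qubits 2 and 3. -/
noncomputable def E23 : Matrix (Fin 2 × Fin 2 × Fin 2) (Fin 2 × Fin 2 × Fin 2) ℂ :=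
  Matrix.of fun p q => if q = (p.1, p.2.2, p.2.1) then 1 else 0

/-- The 4-dimensional code subspace of the 3-qubit DFS. -/
noncomputable def codeSpace3 : Submodule ℂ (Fin 2 × Fin 2 × Fin 2 → ℂ) :=
  Submodule.span ℂ
    {(Real.sqrt 2 : ℂ)⁻¹ • (ket3 0 1 0 - ket3 1 0 0),
     (Real.sqrt 2 : ℂ)⁻¹ • (ket3 0 1 1 - ket3 1 0 1),
     (Real.sqrt 6 : ℂ)⁻¹ • ((2 : ℂ) • ket3 0 0 1 - ket3 0 1 0 - ket3 1 0 0),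
     (Real.sqrt 6 : ℂ)⁻¹ • ((-2 : ℂ) • ket3 1 1 0 + ket3 0 1 1 + ket3 1 0 1)}

open Kronecker

/-- The Pauli Z matrix. -/
noncomputable def pauliZ : Matrix (Fin 2) (Fin 2) ℂ := !![1, 0; 0, -1]

/-- Collective spin operator `S_Z = σz⊗I⊗I + I⊗σz⊗I + I⊗I⊗σz`. -/
noncomputable def SZ3 : Matrix (Fin 2 × Fin 2 × Fin 2) (Fin 2 × Fin 2 × Fin 2) ℂ :=
  pauliZ ⊗ₖ ((1 : Matrix (Fin 2) (Fin 2) ℂ) ⊗ₖ (1 : Matrix (Fin 2) (Fin 2) ℂ)) +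
  (1 : Matrix (Fin 2) (Fin 2) ℂ) ⊗ₖ (pauliZ ⊗ₖ (1 : Matrix (Fin 2) (Fin 2) ℂ)) +
  (1 : Matrix (Fin 2) (Fin 2) ℂ) ⊗ₖ ((1 : Matrix (Fin 2) (Fin 2) ℂ) ⊗ₖ pauliZ)

noncomputable def zf : Fin 2 → ℂ := ![1, -1]
noncomputable def fz : Fin 2 × Fin 2 × Fin 2 → ℂ := fun p => zf p.1 + zf p.2.1 + zf p.2.2

lemma pauliZ_diag : pauliZ = Matrix.diagonal zf := by
  ext i j; fin_cases i <;> fin_cases j <;> simp [pauliZ, zf, Matrix.diagonal]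

lemma SZ3_diag : SZ3 = Matrix.diagonal fz := by
  have h1 : (1 : Matrix (Fin 2) (Fin 2) ℂ) = Matrix.diagonal (fun _ => 1) := by
    simp [Matrix.diagonal_one]
  rw [SZ3, pauliZ_diag, h1]
  simp only [Matrix.diagonal_kronecker_diagonal]
  simp only [Matrix.diagonal_add]
  ext p q
  rcases eq_or_ne p q with h | h <;> simp [Matrix.diagonal_apply, fz, h]

lemma comm12 : Commute SZ3 E12 := by
  rw [Commute, SemiconjBy, SZ3_diag]
  ext p q
  simp only [Matrix.diagonal_mul, Matrix.mul_diagonal, E12, Matrix.of_apply]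
  by_cases h : q = (p.2.1, p.1, p.2.2)
  · simp [h, fz]; ring
  · simp [h]

lemma comm13 : Commute SZ3 E13 := by
  rw [Commute, SemiconjBy, SZ3_diag]
  ext p q
  simp only [Matrix.diagonal_mul, Matrix.mul_diagonal, E13, Matrix.of_apply]
  by_cases h : q = (p.2.2, p.2.1, p.1)
  · simp [h, fz]; ring
  · simp [h]

lemma comm23 : Commute SZ3 E23 := by
  rw [Commute, SemiconjBy, SZ3_diag]
  ext p q
  simp only [Matrix.diagonal_mul, Matrix.mul_diagonal, E23, Matrix.of_apply]
  by_cases h : q = (p.1, p.2.2, p.2.1)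
  · simp [h, fz]; ring
  · simp [h]

lemma commute_smul {A B : Matrix (Fin 2 × Fin 2 × Fin 2) (Fin 2 × Fin 2 × Fin 2) ℂ}
    (h : Commute A B) (c : ℂ) : Commute A (c • B) := by
  rw [Commute, SemiconjBy, Matrix.mul_smul, Matrix.smul_mul, h.eq]

lemma SZ3_mulVec_eig (v : Fin 2 × Fin 2 × Fin 2 → ℂ) (c : ℂ)
    (h : ∀ x, fz x * v x = c * v x) : SZ3.mulVec v = c • v := by
  funext x
  rw [SZ3_diag]
  simp [Matrix.mulVec_diagonal, h x]

/-- the collective spin operator `S_Z` preserves the code subspace of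
the 3-qubit DFS and commutes with the logical operators `X̄` and `Z̄`. -/
theorem collective_Z_preserves_code
    (Xbar Zbar : Matrix (Fin 2 × Fin 2 × Fin 2) (Fin 2 × Fin 2 × Fin 2) ℂ)
    (hX : Xbar = (Real.sqrt 3 : ℂ)⁻¹ • (E23 - E13))
    (hZ : Zbar = (1 / 3 : ℂ) • (E13 + E23 - (2 : ℂ) • E12)) :
    (∀ v ∈ codeSpace3, SZ3.mulVec v ∈ codeSpace3) ∧
    Commute SZ3 Xbar ∧ Commute SZ3 Zbar := by
  refine ⟨?_, ?_, ?_⟩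
  · intro v hv
    induction hv using Submodule.span_induction with
    | mem g hg =>
      have mem_g : g ∈ codeSpace3 := Submodule.subset_span hg
      -- each generator is an eigenvector of SZ3
      rcases hg with h | h | h | h
      · have : SZ3.mulVec g = (1 : ℂ) • g := by
          rw [h]
          apply SZ3_mulVec_eig
          rintro ⟨a, b, c⟩
          fin_cases a <;> fin_cases b <;> fin_cases c <;>
            simp [fz, zf, ket3, Prod.ext_iff] <;> try ring
        rw [this]; exact Submodule.smul_mem _ _ mem_g
      · have : SZ3.mulVec g = (-1 : ℂ) • g := by
          rw [h]
          apply SZ3_mulVec_eig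
          rintro ⟨a, b, c⟩
          fin_cases a <;> fin_cases b <;> fin_cases c <;>
            simp [fz, zf, ket3, Prod.ext_iff] <;> try ring
        rw [this]; exact Submodule.smul_mem _ _ mem_g
      · have : SZ3.mulVec g = (1 : ℂ) • g := by
          rw [h]
          apply SZ3_mulVec_eig
          rintro ⟨a, b, c⟩
          fin_cases a <;> fin_cases b <;> fin_cases c <;>
            simp [fz, zf, ket3, Prod.ext_iff] <;> try ring
        rw [this]; exact Submodule.smul_mem _ _ mem_g
      · have : SZ3.mulVec g = (-1 : ℂ) • g := by
          rw [h]
          apply SZ3_mulVec_eig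
          rintro ⟨a, b, c⟩
          fin_cases a <;> fin_cases b <;> fin_cases c <;>
            simp [fz, zf, ket3, Prod.ext_iff] <;> try ring
        rw [this]; exact Submodule.smul_mem _ _ mem_g
    | zero => simpa [Matrix.mulVec_zero] using Submodule.zero_mem codeSpace3
    | add x y _ _ hx hy =>
      rw [Matrix.mulVec_add]; exact Submodule.add_mem _ hx hy
    | smul c x _ hx =>
      rw [Matrix.mulVec_smul]; exact Submodule.smul_mem _ _ hx
  · rw [hX]
    exact commute_smul (comm23.sub_right comm13) _
  · rw [hZ]
    refine commute_smul ?_ _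
    exact (comm13.add_right comm23).sub_right (commute_smul comm12 2)
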